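/- Let L1 and L2 be regular languages over a finite alphabet Σ. Then there exist n ∈ ℕ and regular languages N_1, …, N_n and M_1, …, M_n with N_i ⊆ L1 and M_i ⊆ L2 for every i, such that L1 ⊙ L2 = ⋃_{i=1}^n N_i · M_i (where N_i · M_i is the concatenation of languages). -/

import Mathlib

namespace UCAux

variable {α : Type}

/-- DFA-definable sets are regular. -/
theorem isRegular_dfaSet {σ : Type} [Fintype σ] (M : DFA α σ) (s : σ) (acc : Set σ) :
    Language.IsRegular ({x | M.evalFrom s x ∈ acc} : Language α) :=
  ⟨σ, ‹_›, ⟨M.step, s, acc⟩, rfl⟩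

theorem isRegular_and {L1 L2 : Language α} (h1 : L1.IsRegular) (h2 : L2.IsRegular) :
    Language.IsRegular ({x | x ∈ L1 ∧ x ∈ L2} : Language α) := by
  obtain ⟨σ1, f1, M1, rfl⟩ := h1
  obtain ⟨σ2, f2, M2, rfl⟩ := h2
  refine ⟨σ1 × σ2, inferInstance,
    ⟨fun s a => (M1.step s.1 a, M2.step s.2 a), (M1.start, M2.start),
      {s | s.1 ∈ M1.accept ∧ s.2 ∈ M2.accept}⟩, ?_⟩
  have key : ∀ (x : List α) (s : σ1 × σ2),
      (⟨fun s a => (M1.step s.1 a, M2.step s.2 a), (M1.start, M2.start),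
        {s | s.1 ∈ M1.accept ∧ s.2 ∈ M2.accept}⟩ : DFA α (σ1 × σ2)).evalFrom s x
        = (M1.evalFrom s.1 x, M2.evalFrom s.2 x) := by
    intro x
    induction x with
    | nil => intro s; rfl
    | cons a l ih => intro s; exact ih (M1.step s.1 a, M2.step s.2 a)
  ext x
  simp only [DFA.mem_accepts, DFA.eval, key, Set.mem_setOf_eq]
  rfl

theorem isRegular_not {L : Language α} (h : L.IsRegular) :
    Language.IsRegular ({x | x ∉ L} : Language α) := by
  obtain ⟨σ, f, M, rfl⟩ := h
  exact ⟨σ, f, ⟨M.step, M.start, {s | s ∉ M.accept}⟩, rfl⟩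

theorem isRegular_ne_nil : Language.IsRegular ({x : List α | x ≠ []} : Language α) := by
  have h : ∀ (x : List α), List.foldl (fun (_ : Bool) (_ : α) => false) false x = false := by
    intro x; induction x with
    | nil => rfl
    | cons a l ih => exact ih
  refine ⟨Bool, inferInstance, ⟨fun _ _ => false, true, {false}⟩, ?_⟩
  ext x
  cases x with
  | nil =>
    simp [DFA.mem_accepts, DFA.eval, DFA.evalFrom]
    exact fun hx => hx rfl
  | cons a l =>
    simp [DFA.mem_accepts, DFA.eval, DFA.evalFrom, h l]
    exact List.cons_ne_nil a l

end UCAux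

namespace UCAux

variable {α : Type}

/-- NFA recognizing the concatenation of two DFA languages. -/
def concatNFA {σ1 σ2 : Type} (M1 : DFA α σ1) (M2 : DFA α σ2) : NFA α (σ1 ⊕ σ2) where
  step s a :=
    match s with
    | Sum.inl q => {t | t = Sum.inl (M1.step q a) ∨
        (q ∈ M1.accept ∧ t = Sum.inr (M2.step M2.start a))}
    | Sum.inr q => {t | t = Sum.inr (M2.step q a)}
  start := {t | t = Sum.inl M1.start ∨ (M1.start ∈ M1.accept ∧ t = Sum.inr M2.start)}
  accept := {t | (∃ q ∈ M2.accept, t = Sum.inr q) ∨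
      (M2.start ∈ M2.accept ∧ ∃ q ∈ M1.accept, t = Sum.inl q)}

theorem concatNFA_eval {σ1 σ2 : Type} (M1 : DFA α σ1) (M2 : DFA α σ2) (w : List α) :
    (concatNFA M1 M2).eval w =
      {t | t = Sum.inl (M1.eval w) ∨
        ∃ p m, p ++ m = w ∧ (m ≠ [] ∨ w = []) ∧ p ∈ M1.accepts ∧ t = Sum.inr (M2.eval m)} := by
  induction w using List.reverseRecOn with
  | nil =>
    ext t
    show t ∈ (concatNFA M1 M2).start ↔ _
    constructor
    · rintro (rfl | ⟨h1, rfl⟩)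
      · exact Or.inl rfl
      · exact Or.inr ⟨[], [], rfl, Or.inr rfl, h1, rfl⟩
    · rintro (rfl | ⟨p, m, hpm, _, hp, rfl⟩)
      · exact Or.inl rfl
      · obtain ⟨rfl, rfl⟩ := List.append_eq_nil_iff.mp hpm
        exact Or.inr ⟨hp, rfl⟩
  | append_singleton w a ih =>
    ext t
    rw [NFA.eval_append_singleton, NFA.mem_stepSet]
    constructor
    · rintro ⟨s, hs, ht⟩
      rw [ih] at hs
      rcases hs with rfl | ⟨p, m, hpm, hcond, hp, rfl⟩
      · rcases ht with rfl | ⟨hacc, rfl⟩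
        · exact Or.inl (by rw [DFA.eval_append_singleton])
        · refine Or.inr ⟨w, [a], rfl, Or.inl (by simp), hacc, by rw [DFA.eval_singleton]⟩
      · rcases ht with rfl
        refine Or.inr ⟨p, m ++ [a], by rw [← List.append_assoc, hpm], Or.inl (by simp),
          hp, by rw [DFA.eval_append_singleton]⟩
    · rintro (rfl | ⟨p, m, hpm, hcond, hp, rfl⟩)
      · refine ⟨Sum.inl (M1.eval w), ?_, ?_⟩
        · rw [ih]; exact Or.inl rfl
        · exact Or.inl (by rw [DFA.eval_append_singleton])
      · have hm : m ≠ [] := by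
          rcases hcond with h | h
          · exact h
          · simp at h
        rcases List.eq_nil_or_concat m with rfl | ⟨m', b, rfl⟩
        · exact absurd rfl hm
        · simp only [List.concat_eq_append] at hpm hm ⊢
          rw [← List.append_assoc] at hpm
          obtain ⟨hpm', hba⟩ := List.append_inj' hpm rfl
          have hb : b = a := by simpa using hba
          subst hb
          by_cases hm' : m' = []
          · subst hm'
            simp only [List.append_nil] at hpm'
            subst hpm'
            refine ⟨Sum.inl (M1.eval p), ?_, ?_⟩
            · rw [ih]; exact Or.inl rfl
            · exact Or.inr ⟨hp, by simp⟩
          · refine ⟨Sum.inr (M2.eval m'), ?_, ?_⟩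
            · rw [ih]; exact Or.inr ⟨p, m', hpm', Or.inl hm', hp, rfl⟩
            · show Sum.inr (M2.eval (m' ++ [b])) = Sum.inr (M2.step (M2.eval m') b)
              rw [DFA.eval_append_singleton]

theorem concatNFA_accepts {σ1 σ2 : Type} (M1 : DFA α σ1) (M2 : DFA α σ2) :
    (concatNFA M1 M2).accepts = M1.accepts * M2.accepts := by
  ext w
  rw [NFA.mem_accepts, Language.mem_mul]
  constructor
  · rintro ⟨t, ht, hw⟩
    have hw' : t ∈ ({t | t = Sum.inl (M1.eval w) ∨
        ∃ p m, p ++ m = w ∧ (m ≠ [] ∨ w = []) ∧ p ∈ M1.accepts ∧ t = Sum.inr (M2.eval m)} :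
          Set (σ1 ⊕ σ2)) := by
      rw [← concatNFA_eval]; exact hw
    rcases ht with ⟨q, hq, rfl⟩ | ⟨heps, q, hq, rfl⟩
    · rcases hw' with h | ⟨p, m, hpm, _, hp, heq⟩
      · exact absurd h (by simp)
      · have hqm : q = M2.eval m := by simpa using heq
        exact ⟨p, hp, m, by rw [DFA.mem_accepts, ← hqm]; exact hq, hpm⟩
    · rcases hw' with heq | ⟨p, m, hpm, _, hp, heq⟩
      · have hqw : q = M1.eval w := by simpa using heq
        exact ⟨w, by rw [DFA.mem_accepts, ← hqw]; exact hq, [], heps, by simp⟩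
      · exact absurd heq (by simp)
  · rintro ⟨x, hx, y, hy, rfl⟩
    by_cases hy0 : y = []
    · subst hy0
      refine ⟨Sum.inl (M1.eval (x ++ [])), Or.inr ⟨hy, M1.eval (x ++ []), ?_, rfl⟩, ?_⟩
      · rw [List.append_nil]; exact hx
      · show _ ∈ (concatNFA M1 M2).eval (x ++ [])
        rw [concatNFA_eval]; exact Or.inl rfl
    · refine ⟨Sum.inr (M2.eval y), Or.inl ⟨M2.eval y, hy, rfl⟩, ?_⟩
      show _ ∈ (concatNFA M1 M2).eval (x ++ y)
      rw [concatNFA_eval]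
      exact Or.inr ⟨x, y, rfl, Or.inl hy0, hx, rfl⟩

theorem isRegular_mul {L1 L2 : Language α} (h1 : L1.IsRegular) (h2 : L2.IsRegular) :
    (L1 * L2).IsRegular := by
  obtain ⟨σ1, f1, M1, rfl⟩ := h1
  obtain ⟨σ2, f2, M2, rfl⟩ := h2
  classical
  exact ⟨Set (σ1 ⊕ σ2), inferInstance, (concatNFA M1 M2).toDFA,
    by rw [NFA.toDFA_correct, concatNFA_accepts]⟩

end UCAux

namespace UCAux

variable {α : Type}

/-- DFA tracking the state-transformation function of `M2`, used to recognize
the words `y` whose "future behavior" from each state matches a given set `T`. -/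
def funDFA {σ2 : Type} (M2 : DFA α σ2) (T : Set σ2) : DFA α (σ2 → σ2) where
  step f a := fun q => M2.step (f q) a
  start := id
  accept := {f | ∀ q, q ∈ T ↔ f q ∈ M2.accept}

theorem funDFA_evalFrom {σ2 : Type} (M2 : DFA α σ2) (T : Set σ2) (y : List α)
    (f : σ2 → σ2) :
    (funDFA M2 T).evalFrom f y = fun q => M2.evalFrom (f q) y := by
  induction y generalizing f with
  | nil => rfl
  | cons a l ih => exact ih fun q => M2.step (f q) a

theorem funDFA_accepts {σ2 : Type} (M2 : DFA α σ2) (T : Set σ2) :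
    (funDFA M2 T).accepts = {y | ∀ q, q ∈ T ↔ M2.evalFrom q y ∈ M2.accept} := by
  ext y
  rw [DFA.mem_accepts, DFA.eval, funDFA_evalFrom]
  rfl

end UCAux

/-- The unambiguous concatenation `L1 ⊙ L2`: words `u` admitting exactly one
pair `(u1, u2)` with `u = u1 ++ u2`, `u1 ∈ L1` and `u2 ∈ L2`. -/
def UnambiguousConcat {α : Type} (L1 L2 : Language α) : Language α :=
  {u | ∃! p : List α × List α, p.1 ++ p.2 = u ∧ p.1 ∈ L1 ∧ p.2 ∈ L2}

theorem unambiguous_concat_eq_finite_union_of_concats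
    {α : Type} [Fintype α] (L1 L2 : Language α)
    (h1 : L1.IsRegular) (h2 : L2.IsRegular) :
    ∃ (n : ℕ) (N M : Fin n → Language α),
      (∀ i, (N i).IsRegular) ∧ (∀ i, (M i).IsRegular) ∧
      (∀ i, N i ≤ L1) ∧ (∀ i, M i ≤ L2) ∧
      UnambiguousConcat L1 L2 = ⋃ i, (N i * M i : Language α) := by
  classical
  obtain ⟨σ1, f1, D1, rfl⟩ := h1
  obtain ⟨σ2, f2, D2, rfl⟩ := h2
  let NL : σ1 × Set σ2 → Language α := fun i =>
    {x | x ∈ D1.accepts ∧ D1.eval x = i.1 ∧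
      ¬∃ p m, p ++ m = x ∧ m ≠ [] ∧ p ∈ D1.accepts ∧ D2.eval m ∈ i.2}
  let ML : σ1 × Set σ2 → Language α := fun i =>
    {y | y ∈ D2.accepts ∧ (∀ q, q ∈ i.2 ↔ D2.evalFrom q y ∈ D2.accept) ∧
      ¬∃ p m, p ++ m = y ∧ p ≠ [] ∧ D1.evalFrom i.1 p ∈ D1.accept ∧ m ∈ D2.accepts}
  -- subset properties
  have hNsub : ∀ i, NL i ≤ D1.accepts := fun i x hx => hx.1
  have hMsub : ∀ i, ML i ≤ D2.accepts := fun i y hy => hy.1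
  -- the key set equality
  have hmain : UnambiguousConcat D1.accepts D2.accepts = ⋃ i, (NL i * ML i : Language α) := by
    ext u
    constructor
    · rintro ⟨⟨x, y⟩, ⟨hxy, hx, hy⟩, huniq⟩
      simp only at hxy hx hy
      subst hxy
      have hmemN : x ∈ NL (D1.eval x, {q | D2.evalFrom q y ∈ D2.accept}) := by
        refine ⟨hx, rfl, ?_⟩
        rintro ⟨p, m, hpm, hm, hp, hmem⟩
        have hmy : m ++ y ∈ D2.accepts := by
          rw [DFA.mem_accepts, DFA.eval, DFA.evalFrom_of_append]
          exact hmem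
        have := huniq (p, m ++ y) ⟨by simp [← hpm, List.append_assoc], hp, hmy⟩
        have hpx : p = x := congrArg Prod.fst this
        apply hm
        have := congrArg List.length hpm
        simp [hpx] at this
        exact this
      have hmemM : y ∈ ML (D1.eval x, {q | D2.evalFrom q y ∈ D2.accept}) := by
        refine ⟨hy, fun q => Iff.rfl, ?_⟩
        rintro ⟨p, m, hpm, hp0, hacc, hm2⟩
        have hxp : x ++ p ∈ D1.accepts := by
          rw [DFA.mem_accepts, DFA.eval, DFA.evalFrom_of_append]
          exact hacc
        have := huniq (x ++ p, m) ⟨by rw [List.append_assoc, hpm], hxp, hm2⟩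
        have hpx : x ++ p = x := congrArg Prod.fst this
        apply hp0
        have := congrArg List.length hpx
        simp at this
        exact this
      exact Set.mem_iUnion.mpr ⟨(D1.eval x, {q | D2.evalFrom q y ∈ D2.accept}),
        Language.append_mem_mul hmemN hmemM⟩
    · intro hu
      obtain ⟨i, hu⟩ := Set.mem_iUnion.mp hu
      change u ∈ (NL i * ML i : Language α) at hu
      rw [Language.mem_mul] at hu
      obtain ⟨x, hxN, y, hyM, rfl⟩ := hu
      obtain ⟨hx1, hxeval, hxbad⟩ := hxN
      obtain ⟨hy2, hyT, hybad⟩ := hyM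
      refine ⟨(x, y), ⟨rfl, hx1, hy2⟩, ?_⟩
      rintro ⟨x', y'⟩ ⟨hxy', hx', hy'⟩
      simp only at hxy' hx' hy' ⊢
      rcases List.append_eq_append_iff.mp hxy' with ⟨a', ha1, ha2⟩ | ⟨c', hc1, hc2⟩
      · -- x = x' ++ a', y' = a' ++ y
        rcases eq_or_ne a' [] with rfl | ha0
        · simp at ha1 ha2
          exact Prod.ext_iff.mpr ⟨ha1.symm, ha2⟩
        · exfalso
          apply hxbad
          refine ⟨x', a', ha1.symm, ha0, hx', ?_⟩
          have hmem2 : a' ++ y ∈ D2.accepts := by rw [← ha2]; exact hy'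
          rw [DFA.mem_accepts, DFA.eval, DFA.evalFrom_of_append] at hmem2
          exact (hyT (D2.eval a')).mpr hmem2
      · -- x' = x ++ c', y = c' ++ y'
        rcases eq_or_ne c' [] with rfl | hc0
        · simp at hc1 hc2
          exact Prod.ext_iff.mpr ⟨hc1, hc2.symm⟩
        · exfalso
          apply hybad
          refine ⟨c', y', hc2.symm, hc0, ?_, hy'⟩
          rw [← hxeval]
          have : D1.eval (x ++ c') ∈ D1.accept := by rw [← hc1]; exact hx'
          rw [DFA.eval, DFA.evalFrom_of_append] at this
          exact this
  -- regularity of the pieces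
  have hNreg : ∀ i, (NL i).IsRegular := by
    intro i
    have hbad := UCAux.isRegular_mul (⟨σ1, f1, D1, rfl⟩ : Language.IsRegular D1.accepts)
      (UCAux.isRegular_and UCAux.isRegular_ne_nil (UCAux.isRegular_dfaSet D2 D2.start i.2))
    have h := UCAux.isRegular_and
      (UCAux.isRegular_and (⟨σ1, f1, D1, rfl⟩ : Language.IsRegular D1.accepts)
        (UCAux.isRegular_dfaSet D1 D1.start ({i.1} : Set σ1)))
      (UCAux.isRegular_not hbad)
    refine (congrArg Language.IsRegular (?_ : NL i = _)).mpr h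
    ext x
    constructor
    · rintro ⟨hx1, hx2, hx3⟩
      refine ⟨⟨hx1, hx2⟩, ?_⟩
      intro hx
      obtain ⟨p, hp, m, ⟨hm, hmem⟩, hpm⟩ := Language.mem_mul.mp hx
      exact hx3 ⟨p, m, hpm, hm, hp, hmem⟩
    · rintro ⟨⟨hx1, hx2⟩, hx3⟩
      refine ⟨hx1, hx2, ?_⟩
      rintro ⟨p, m, hpm, hm, hp, hmem⟩
      exact hx3 (Language.mem_mul.mpr ⟨p, hp, m, ⟨hm, hmem⟩, hpm⟩)
  have hMreg : ∀ i, (ML i).IsRegular := by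
    intro i
    have hbad := UCAux.isRegular_mul
      (UCAux.isRegular_and UCAux.isRegular_ne_nil (UCAux.isRegular_dfaSet D1 i.1 D1.accept))
      (⟨σ2, f2, D2, rfl⟩ : Language.IsRegular D2.accepts)
    have hT : Language.IsRegular
        ({y | ∀ q, q ∈ i.2 ↔ D2.evalFrom q y ∈ D2.accept} : Language α) := by
      refine ⟨σ2 → σ2, inferInstance, UCAux.funDFA D2 i.2, ?_⟩
      rw [UCAux.funDFA_accepts]
    have h := UCAux.isRegular_and
      (UCAux.isRegular_and (⟨σ2, f2, D2, rfl⟩ : Language.IsRegular D2.accepts) hT)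
      (UCAux.isRegular_not hbad)
    refine (congrArg Language.IsRegular (?_ : ML i = _)).mpr h
    ext y
    constructor
    · rintro ⟨hy1, hy2, hy3⟩
      refine ⟨⟨hy1, hy2⟩, ?_⟩
      intro hy
      obtain ⟨p, ⟨hp0, hacc⟩, m, hm, hpm⟩ := Language.mem_mul.mp hy
      exact hy3 ⟨p, m, hpm, hp0, hacc, hm⟩
    · rintro ⟨⟨hy1, hy2⟩, hy3⟩
      refine ⟨hy1, hy2, ?_⟩
      rintro ⟨p, m, hpm, hp0, hacc, hm⟩
      exact hy3 (Language.mem_mul.mpr ⟨p, ⟨hp0, hacc⟩, m, hm, hpm⟩)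
  -- reindex by Fin n
  refine ⟨Fintype.card (σ1 × Set σ2), fun j => NL ((Fintype.equivFin (σ1 × Set σ2)).symm j),
    fun j => ML ((Fintype.equivFin (σ1 × Set σ2)).symm j), fun j => hNreg _, fun j => hMreg _,
    fun j => hNsub _, fun j => hMsub _, ?_⟩
  rw [hmain]
  exact ((Fintype.equivFin (σ1 × Set σ2)).symm.surjective.iUnion_comp
    fun i => (NL i * ML i : Language α)).symm
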